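/- For any finite simple graph G and any complete graph K_m, the join satisfies ρ_T(G ∨ K_m) = ρ_T(G), where the join G ∨ K_m is obtained from the disjoint union of G and K_m by adding all edges between vertices of G and vertices of K_m. -/
import Mathlib


/-- A min-plus `k`-tropical dot product representation of `G` with threshold `t`:
distinct vertices `x, y` are adjacent iff `min_{1 ≤ i ≤ k} (f(x)_i + f(y)_i) ≥ t`
(equivalently, every coordinate sum is at least `t`). -/
def MinPlusRep {V : Type*} (G : SimpleGraph V) (k : ℕ) (f : V → Fin k → ℝ) (t : ℝ) : Prop :=
  0 < t ∧ ∀ x y : V, x ≠ y → (G.Adj x y ↔ ∀ i : Fin k, t ≤ f x i + f y i)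

/-- The min-plus tropical dot product dimension `ρ_T(G)`. -/
noncomputable def rhoT {V : Type*} (G : SimpleGraph V) : ℕ :=
  sInf {k : ℕ | 0 < k ∧ ∃ (f : V → Fin k → ℝ) (t : ℝ), MinPlusRep G k f t}

/-- The join of two graphs on disjoint vertex sets: their disjoint union together with
all edges joining a vertex of the first graph to a vertex of the second. -/
def graphJoin {V W : Type*} (G : SimpleGraph V) (H : SimpleGraph W) :
    SimpleGraph (V ⊕ W) :=
  SimpleGraph.fromRel (fun x y =>
    match x, y with
    | Sum.inl a, Sum.inl b => G.Adj a b
    | Sum.inr a, Sum.inr b => H.Adj a b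
    | Sum.inl _, Sum.inr _ => True
    | Sum.inr _, Sum.inl _ => False)

lemma graphJoin_adj_inl_inl {V W : Type*} (G : SimpleGraph V) (H : SimpleGraph W)
    (x y : V) : (graphJoin G H).Adj (Sum.inl x) (Sum.inl y) ↔ G.Adj x y := by
  simp only [graphJoin, SimpleGraph.fromRel_adj]
  constructor
  · rintro ⟨-, h | h⟩
    · exact h
    · exact h.symm
  · intro h
    exact ⟨by simp [h.ne], Or.inl h⟩

lemma graphJoin_adj_inl_inr {V W : Type*} (G : SimpleGraph V) (H : SimpleGraph W)
    (x : V) (y : W) : (graphJoin G H).Adj (Sum.inl x) (Sum.inr y) := by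
  simp [graphJoin, SimpleGraph.fromRel_adj]

lemma graphJoin_adj_inr_inr {V W : Type*} (G : SimpleGraph V) (H : SimpleGraph W)
    (x y : W) : (graphJoin G H).Adj (Sum.inr x) (Sum.inr y) ↔ H.Adj x y := by
  simp only [graphJoin, SimpleGraph.fromRel_adj]
  constructor
  · rintro ⟨-, h | h⟩
    · exact h
    · exact h.symm
  · intro h
    exact ⟨by simp [h.ne], Or.inl h⟩

/-- Joining a complete graph to `G` does not change the min-plus tropical dot product
dimension: `ρ_T(G ∨ K_m) = ρ_T(G)`. -/
theorem stmt_14 {V : Type*} [Fintype V] (G : SimpleGraph V) (m : ℕ) :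
    rhoT (graphJoin G (⊤ : SimpleGraph (Fin m))) = rhoT G := by
  unfold rhoT
  congr 1
  ext k
  simp only [Set.mem_setOf_eq]
  constructor
  · rintro ⟨hk, f, t, ht, hrep⟩
    refine ⟨hk, fun v => f (Sum.inl v), t, ht, fun x y hxy => ?_⟩
    have h := hrep (Sum.inl x) (Sum.inl y) (by simpa using hxy)
    rw [← h, graphJoin_adj_inl_inl]
  · rintro ⟨hk, f, t, ht, hrep⟩
    set B : ℝ := ((Finset.univ.sup fun p : V × Fin k => ⌈t - f p.1 p.2⌉₊ : ℕ) : ℝ) with hB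
    set M : ℝ := max t B with hMdef
    have hM1 : ∀ (v : V) (i : Fin k), t ≤ M + f v i := by
      intro v i
      have h1 : t - f v i ≤ (⌈t - f v i⌉₊ : ℝ) := Nat.le_ceil _
      have h2 : (⌈t - f v i⌉₊ : ℝ) ≤ B := by
        rw [hB]
        exact Nat.cast_le.mpr (Finset.le_sup (f := fun p : V × Fin k => ⌈t - f p.1 p.2⌉₊) (Finset.mem_univ (v, i)))
      have : t - f v i ≤ M := le_trans (h1.trans h2) (le_max_right _ _)
      linarith
    have hMpos : 0 < M := lt_of_lt_of_le ht (le_max_left _ _)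
    have hM2 : t ≤ M + M := by
      have := le_max_left t B
      linarith
    refine ⟨hk, Sum.elim f (fun _ _ => M), t, ht, ?_⟩
    rintro (x | x) (y | y) hxy
    · rw [graphJoin_adj_inl_inl]
      have := hrep x y (by simpa using hxy)
      simpa using this
    · simp only [graphJoin_adj_inl_inr, Sum.elim_inl, Sum.elim_inr, true_iff]
      intro i
      have := hM1 x i
      linarith
    · have hadj : (graphJoin G (⊤ : SimpleGraph (Fin m))).Adj (Sum.inr x) (Sum.inl y) :=
        (graphJoin_adj_inl_inr G _ y x).symm
      simp only [hadj, Sum.elim_inl, Sum.elim_inr, true_iff]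
      intro i
      have := hM1 y i
      linarith
    · rw [graphJoin_adj_inr_inr]
      have hne : x ≠ y := by simpa using hxy
      simp only [SimpleGraph.top_adj, Sum.elim_inr]
      exact ⟨fun _ _ => hM2, fun _ => hne⟩
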